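/- Fix n ∈ ℕ and boolean vectors m, v : Fin n → Bool. Let G be the simple graph on the vertex type Fin n × Fin 3, writing a_j = (j,0), u_j = (j,1), b_j = (j,2), with adjacency given by: a_j is adjacent to u_j iff v j = true; u_j is adjacent to b_j iff m j = true; and there are no other edges. Then every maximal matching M of G (a matching that is not properly contained in any other matching of G) has exactly |{j : v j = true}| + |{j : m j = true}| − |{j : v j = true ∧ m j = true}| edges. In particular, every maximal matching of G has exactly |{j : v j = true}| + |{j : m j = true}| edges if and only if there is no j with v j = true and m j = true. -/

import Mathlib

/-- OMv gadget for fully retroactive maximal matching: on vertex set `Fin n × Fin 3` with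
`a j = (j,0)`, `u j = (j,1)`, `b j = (j,2)`, where `a j` is adjacent to `u j` iff `v j = true`
and `u j` is adjacent to `b j` iff `m j = true` (and there are no other edges), every maximal
matching has exactly `|{j | v j}| + |{j | m j}| - |{j | v j ∧ m j}|` edges; in particular every
maximal matching has exactly `|{j | v j}| + |{j | m j}|` edges iff the boolean inner product of
`m` and `v` is `0`. -/
theorem omv_maximal_matching_gadget (n : ℕ) (m v : Fin n → Bool)
    (G : SimpleGraph (Fin n × Fin 3))
    (hG : ∀ x y : Fin n × Fin 3, G.Adj x y ↔
      (∃ j : Fin n, v j = true ∧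
        ((x = (j, 0) ∧ y = (j, 1)) ∨ (x = (j, 1) ∧ y = (j, 0)))) ∨
      (∃ j : Fin n, m j = true ∧
        ((x = (j, 1) ∧ y = (j, 2)) ∨ (x = (j, 2) ∧ y = (j, 1))))) :
    (∀ M : G.Subgraph, M.IsMatching →
      (∀ M' : G.Subgraph, M'.IsMatching → M ≤ M' → M' = M) →
      M.edgeSet.ncard =
        {j : Fin n | v j = true}.ncard + {j : Fin n | m j = true}.ncard -
          {j : Fin n | v j = true ∧ m j = true}.ncard) ∧
    ((∀ M : G.Subgraph, M.IsMatching →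
      (∀ M' : G.Subgraph, M'.IsMatching → M ≤ M' → M' = M) →
      M.edgeSet.ncard = {j : Fin n | v j = true}.ncard + {j : Fin n | m j = true}.ncard) ↔
      ∀ j : Fin n, ¬(v j = true ∧ m j = true)) := by
  classical
  set S : Set (Fin n) := {j : Fin n | v j = true ∨ m j = true} with hSdef
  set A : Set (Fin n) := {j : Fin n | v j = true} with hAdef
  set B : Set (Fin n) := {j : Fin n | m j = true} with hBdef
  set C : Set (Fin n) := {j : Fin n | v j = true ∧ m j = true} with hCdef
  have hunion : A ∪ B = S := by ext j; simp [hAdef, hBdef, hSdef]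
  have hinter : A ∩ B = C := by ext j; simp [hAdef, hBdef, hCdef]
  have hcards : S.ncard + C.ncard = A.ncard + B.ncard := by
    rw [← hunion, ← hinter]
    exact Set.ncard_union_add_ncard_inter A B (Set.toFinite A) (Set.toFinite B)
  -- the main counting lemma
  have key : ∀ M : G.Subgraph, M.IsMatching →
      (∀ M' : G.Subgraph, M'.IsMatching → M ≤ M' → M' = M) →
      M.edgeSet.ncard = S.ncard := by
    intro M hM hmax
    -- structure of edges of M
    have hstruct : ∀ x y : Fin n × Fin 3, M.Adj x y →
        ∃ j : Fin n, j ∈ S ∧ x.1 = j ∧ y.1 = j ∧ (x = (j, 1) ∨ y = (j, 1)) := by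
      intro x y hxy
      have := (hG x y).mp (M.adj_sub hxy)
      rcases this with ⟨j, hv, ⟨rfl, rfl⟩ | ⟨rfl, rfl⟩⟩ | ⟨j, hm, ⟨rfl, rfl⟩ | ⟨rfl, rfl⟩⟩
      · exact ⟨j, Or.inl hv, rfl, rfl, Or.inr rfl⟩
      · exact ⟨j, Or.inl hv, rfl, rfl, Or.inl rfl⟩
      · exact ⟨j, Or.inr hm, rfl, rfl, Or.inl rfl⟩
      · exact ⟨j, Or.inr hm, rfl, rfl, Or.inr rfl⟩
    -- every relevant u_j is matched
    have humatch : ∀ j : Fin n, j ∈ S → (j, (1 : Fin 3)) ∈ M.verts := by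
      intro j hj
      by_contra hu
      have hu' : ∀ w, ¬ M.Adj (j, (1 : Fin 3)) w := fun w hw => hu (M.edge_vert hw)
      -- pick an edge of G incident to u_j
      have hadj : ∃ z : Fin n × Fin 3, G.Adj (j, (1 : Fin 3)) z ∧ (∀ w, ¬ M.Adj z w) := by
        rcases hj with hv | hm
        · refine ⟨(j, 0), (hG _ _).mpr (Or.inl ⟨j, hv, Or.inr ⟨rfl, rfl⟩⟩), ?_⟩
          intro w hw
          rcases (hG _ _).mp (M.adj_sub hw) with
            ⟨j', _, ⟨h1, h2⟩ | ⟨h1, h2⟩⟩ | ⟨j', _, ⟨h1, h2⟩ | ⟨h1, h2⟩⟩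
          · have hjj : j = j' := congrArg Prod.fst h1
            subst hjj; subst h2
            exact hu' _ hw.symm
          · have h0 : (0 : Fin 3) = 1 := congrArg Prod.snd h1
            exact absurd h0 (by decide)
          · have h0 : (0 : Fin 3) = 1 := congrArg Prod.snd h1
            exact absurd h0 (by decide)
          · have h0 : (0 : Fin 3) = 2 := congrArg Prod.snd h1
            exact absurd h0 (by decide)
        · refine ⟨(j, 2), (hG _ _).mpr (Or.inr ⟨j, hm, Or.inl ⟨rfl, rfl⟩⟩), ?_⟩
          intro w hw
          rcases (hG _ _).mp (M.adj_sub hw) with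
            ⟨j', _, ⟨h1, h2⟩ | ⟨h1, h2⟩⟩ | ⟨j', _, ⟨h1, h2⟩ | ⟨h1, h2⟩⟩
          · have h0 : (2 : Fin 3) = 0 := congrArg Prod.snd h1
            exact absurd h0 (by decide)
          · have h0 : (2 : Fin 3) = 1 := congrArg Prod.snd h1
            exact absurd h0 (by decide)
          · have h0 : (2 : Fin 3) = 1 := congrArg Prod.snd h1
            exact absurd h0 (by decide)
          · have hjj : j = j' := congrArg Prod.fst h1
            subst hjj; subst h2
            exact hu' _ hw.symm
      obtain ⟨z, hGz, hz⟩ := hadj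
      have hne : ¬ M.Adj (j, (1 : Fin 3)) z := hu' z
      set M' : G.Subgraph := M ⊔ G.subgraphOfAdj hGz with hM'def
      have hdisj : Disjoint M.support (G.subgraphOfAdj hGz).support := by
        rw [SimpleGraph.support_subgraphOfAdj]
        rw [Set.disjoint_right]
        rintro x (rfl | rfl)
        · rintro ⟨w, hw⟩; exact hu' w hw
        · rintro ⟨w, hw⟩; exact hz w hw
      have hM' : M'.IsMatching :=
        hM.sup (SimpleGraph.Subgraph.IsMatching.subgraphOfAdj hGz) hdisj
      have := hmax M' hM' le_sup_left
      have hadjM' : M'.Adj (j, (1 : Fin 3)) z := SimpleGraph.Subgraph.sup_adj.mpr (Or.inr (by simp))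
      rw [this] at hadjM'
      exact hne hadjM'
    -- the bijection from S to the edge set
    let F : Fin n → Sym2 (Fin n × Fin 3) := fun j =>
      if h : (j, (1 : Fin 3)) ∈ M.verts then s((j, (1 : Fin 3)), (hM h).choose)
      else s((j, 0), (j, 0))
    have hFdef : ∀ j (h : (j, (1 : Fin 3)) ∈ M.verts), F j = s((j, (1 : Fin 3)), (hM h).choose) :=
      fun j h => dif_pos h
    have hbij : Set.BijOn F S M.edgeSet := by
      refine ⟨?_, ?_, ?_⟩
      · intro j hj
        have h := humatch j hj
        rw [hFdef j h]
        exact (hM h).choose_spec.1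
      · intro j hj j' hj' heq
        have h := humatch j hj
        have h' := humatch j' hj'
        rw [hFdef j h, hFdef j' h'] at heq
        rcases Sym2.eq_iff.mp heq with ⟨h1, -⟩ | ⟨h1, -⟩
        · exact congrArg Prod.fst h1
        · -- (j,1) = choose of j', which is an M-neighbor of (j',1)
          obtain ⟨j0, _, hx1, hy1, -⟩ := hstruct _ _ ((hM h').choose_spec.1)
          have : j' = j0 := hx1
          have : ((hM h').choose).1 = j' := by rw [hy1, ← this]
          rw [← h1] at this
          exact this
      · rintro e he
        induction e with
        | _ x y =>
          have hxy : M.Adj x y := he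
          obtain ⟨j, hjS, hx1, hy1, hu⟩ := hstruct x y hxy
          refine ⟨j, hjS, ?_⟩
          rcases hu with rfl | rfl
          · have h : (j, (1 : Fin 3)) ∈ M.verts := M.edge_vert hxy
            rw [hFdef j h]
            have : y = (hM h).choose := (hM h).choose_spec.2 y hxy
            rw [← this]
          · have h : (j, (1 : Fin 3)) ∈ M.verts := M.edge_vert hxy.symm
            rw [hFdef j h]
            have : x = (hM h).choose := (hM h).choose_spec.2 x hxy.symm
            rw [← this, Sym2.eq_swap]
    calc M.edgeSet.ncard = (F '' S).ncard := by rw [hbij.image_eq]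
      _ = S.ncard := Set.ncard_image_of_injOn hbij.injOn
  constructor
  · intro M hM hmax
    rw [key M hM hmax]
    omega
  · constructor
    · intro h j hj
      -- existence of a maximal matching
      haveI : Finite G.Subgraph :=
        Finite.of_injective (fun M => (M.verts, M.Adj))
          (fun M N hMN => by
            cases M; cases N
            simpa [SimpleGraph.Subgraph.mk.injEq, Prod.ext_iff] using hMN)
      obtain ⟨M, hMs, hmax⟩ := Set.Finite.exists_maximalFor id
        {M : G.Subgraph | M.IsMatching} (Set.toFinite _)
        ⟨⊥, by intro x hx; simp at hx⟩
      have hmax' : ∀ M' : G.Subgraph, M'.IsMatching → M ≤ M' → M' = M :=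
        fun M' hM' hle => le_antisymm (hmax hM' hle) hle
      have e1 := h M hMs hmax'
      have e2 := key M hMs hmax'
      have hCpos : 0 < C.ncard := by
        rw [Set.ncard_pos (Set.toFinite C)]
        exact ⟨j, hj⟩
      have hAS : A.ncard ≤ S.ncard := Set.ncard_le_ncard (hunion ▸ Set.subset_union_left) (Set.toFinite S)
      omega
    · intro h M hM hmax
      have hC : C = ∅ := by
        ext j; simp only [hCdef, Set.mem_setOf_eq, Set.mem_empty_iff_false, iff_false]
        exact h j
      rw [key M hM hmax]
      rw [hC, Set.ncard_empty] at hcards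
      omega
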